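/- (Borel lemma for Banach spaces) Let X be a real Banach space possessing a C^∞ K-map all of whose iterated Fréchet derivatives are bounded on X. Then for every Banach space Y and every sequence (P_j)_{j=0}^∞, where P_j is a continuous homogeneous polynomial map of degree j from X to Y, there exists a C^∞ map f : X → Y, all of whose iterated Fréchet derivatives are bounded on X, such that for every j and every x ∈ X, the j-th iterated Fréchet derivative of f at 0 satisfies D^j f(0)(x, ..., x) = P_j(x). -/

import Mathlib

open Filter
open scoped Nat

section Aux

variable {X : Type*} [NormedAddCommGroup X] [NormedSpace ℝ X]
variable {Y : Type*} [NormedAddCommGroup Y] [NormedSpace ℝ Y]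

private lemma iteratedFDeriv_congr_nhds {f g : X → Y} {x : X} (h : f =ᶠ[nhds x] g) (n : ℕ) :
    iteratedFDeriv ℝ n f x = iteratedFDeriv ℝ n g x := by
  simp only [← iteratedFDerivWithin_univ]
  exact Filter.EventuallyEq.iteratedFDerivWithin_eq (by rwa [nhdsWithin_univ]) h.eq_of_nhds n

private lemma contDiff_diag {i : ℕ} (G : ContinuousMultilinearMap ℝ (fun _ : Fin i => X) Y) :
    ContDiff ℝ (⊤ : ℕ∞) (fun x : X => G fun _ => x) :=
  G.contDiff.comp (ContinuousLinearMap.pi fun _ : Fin i => ContinuousLinearMap.id ℝ X).contDiff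

private lemma hasFPowerSeries_diag [CompleteSpace Y] {i : ℕ}
    (G : ContinuousMultilinearMap ℝ (fun _ : Fin i => X) Y) :
    HasFPowerSeriesOnBall (fun x : X => G fun _ => x)
      (Pi.single i G : FormalMultilinearSeries ℝ X Y) 0 ⊤ := by
  refine (HasFiniteFPowerSeriesOnBall.mk' (n := i + 1) ?_ ?_ ?_).toHasFPowerSeriesOnBall
  · intro m hm
    exact Pi.single_eq_of_ne (by omega) _
  · exact ENNReal.zero_lt_top
  · intro y _
    rw [zero_add, Finset.sum_eq_single i]
    · simp
    · intro b _ hb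
      rw [Pi.single_eq_of_ne hb]
      rfl
    · intro hni
      exact absurd (Finset.self_mem_range_succ i) hni

private lemma iteratedFDeriv_diag_self [CompleteSpace Y] {i : ℕ}
    (G : ContinuousMultilinearMap ℝ (fun _ : Fin i => X) Y) (y : X) :
    iteratedFDeriv ℝ i (fun x : X => G fun _ => x) 0 (fun _ => y) = i ! • G (fun _ => y) := by
  have h := ((hasFPowerSeries_diag G).factorial_smul y i).symm
  simpa using h

private lemma iteratedFDeriv_diag_ne [CompleteSpace Y] {i k : ℕ} (hk : k ≠ i)
    (G : ContinuousMultilinearMap ℝ (fun _ : Fin i => X) Y) (y : X) :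
    iteratedFDeriv ℝ k (fun x : X => G fun _ => x) 0 (fun _ => y) = 0 := by
  have h := ((hasFPowerSeries_diag G).factorial_smul y k).symm
  rw [Pi.single_eq_of_ne hk] at h
  simpa using h

private lemma norm_iteratedFDeriv_diag_le {i : ℕ}
    (G : ContinuousMultilinearMap ℝ (fun _ : Fin i => X) Y) (k : ℕ) (y : X) :
    ‖iteratedFDeriv ℝ k (fun x : X => G fun _ => x) y‖
      ≤ (i.descFactorial k : ℝ) * ‖G‖ * ‖y‖ ^ (i - k) := by
  set Δ : X →L[ℝ] (Fin i → X) :=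
    ContinuousLinearMap.pi fun _ : Fin i => ContinuousLinearMap.id ℝ X with hΔ
  have hΔap : ∀ x : X, Δ x = fun _ => x := fun x => rfl
  have hΔnorm : ∀ x : X, ‖Δ x‖ ≤ ‖x‖ := by
    intro x
    rw [hΔap]
    exact (pi_norm_le_iff_of_nonneg (norm_nonneg x)).2 fun _ => le_rfl
  have hΔop : ‖Δ‖ ≤ 1 :=
    Δ.opNorm_le_bound zero_le_one (fun x => by rw [one_mul]; exact hΔnorm x)
  have hcomp : iteratedFDeriv ℝ k (⇑G ∘ ⇑Δ) y
      = (iteratedFDeriv ℝ k (⇑G) (Δ y)).compContinuousLinearMap fun _ => Δ :=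
    Δ.iteratedFDeriv_comp_right G.contDiff y le_top
  have heq : (fun x : X => G fun _ => x) = ⇑G ∘ ⇑Δ := rfl
  rw [heq, hcomp]
  have h1 : ‖(iteratedFDeriv ℝ k (⇑G) (Δ y)).compContinuousLinearMap (fun _ => Δ)‖
      ≤ ‖iteratedFDeriv ℝ k (⇑G) (Δ y)‖ * ∏ _j : Fin k, ‖Δ‖ :=
    ContinuousMultilinearMap.norm_compContinuousLinearMap_le _ _
  have h2 : (∏ _j : Fin k, ‖Δ‖) ≤ 1 :=
    Finset.prod_le_one (fun _ _ => norm_nonneg _) (fun _ _ => hΔop)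
  have h3 : ‖iteratedFDeriv ℝ k (⇑G) (Δ y)‖
      ≤ (Fintype.card (Fin i)).descFactorial k * ‖G‖ * ‖Δ y‖ ^ (Fintype.card (Fin i) - k) :=
    G.norm_iteratedFDeriv_le k (Δ y)
  rw [Fintype.card_fin] at h3
  have h4 : ‖Δ y‖ ^ (i - k) ≤ ‖y‖ ^ (i - k) :=
    pow_le_pow_left₀ (norm_nonneg _) (hΔnorm y) _
  calc ‖(iteratedFDeriv ℝ k (⇑G) (Δ y)).compContinuousLinearMap (fun _ => Δ)‖
      ≤ ‖iteratedFDeriv ℝ k (⇑G) (Δ y)‖ * ∏ _j : Fin k, ‖Δ‖ := h1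
    _ ≤ ‖iteratedFDeriv ℝ k (⇑G) (Δ y)‖ * 1 :=
        mul_le_mul_of_nonneg_left h2 (norm_nonneg _)
    _ = ‖iteratedFDeriv ℝ k (⇑G) (Δ y)‖ := mul_one _
    _ ≤ (i.descFactorial k : ℝ) * ‖G‖ * ‖Δ y‖ ^ (i - k) := h3
    _ ≤ (i.descFactorial k : ℝ) * ‖G‖ * ‖y‖ ^ (i - k) :=
        mul_le_mul_of_nonneg_left h4 (by positivity)

private lemma descFactorial_le_factorial (j k : ℕ) : j.descFactorial k ≤ j ! := by
  rcases le_or_gt k j with h | h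
  · calc j.descFactorial k ≤ (j - k)! * j.descFactorial k :=
        Nat.le_mul_of_pos_left _ (Nat.factorial_pos _)
    _ = j ! := Nat.factorial_mul_descFactorial h
  · rw [Nat.descFactorial_eq_zero_iff_lt.2 h]
    exact Nat.zero_le _

end Aux

/-- **Borel lemma for Banach spaces.**  If a real Banach space `X` possesses a `C^∞` K-map
with all iterated Fréchet derivatives bounded, then for every Banach space `Y` and every
sequence `(P_j)` of continuous homogeneous polynomial maps (with `P_j` of degree `j`, given
by continuous symmetric `j`-linear maps `g j`) there is a `C^∞` map `f : X → Y` with all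
iterated Fréchet derivatives bounded such that `D^j f(0) (x, ..., x) = P_j x` for all `j`
and `x`. -/
theorem borel_lemma_banach
    {X : Type*} [NormedAddCommGroup X] [NormedSpace ℝ X] [CompleteSpace X]
    (H : X → X) (hH : ContDiff ℝ (⊤ : ℕ∞) H)
    (hHid : ∀ᶠ x in nhds (0 : X), H x = x)
    (hHbdd : ∃ C : ℝ, ∀ x, ‖H x‖ ≤ C)
    (hHder : ∀ n : ℕ, ∃ C : ℝ, ∀ x, ‖iteratedFDeriv ℝ n H x‖ ≤ C)
    {Y : Type*} [NormedAddCommGroup Y] [NormedSpace ℝ Y] [CompleteSpace Y]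
    (g : ∀ j : ℕ, ContinuousMultilinearMap ℝ (fun _ : Fin j => X) Y)
    (hsym : ∀ (j : ℕ) (v : Fin j → X) (σ : Equiv.Perm (Fin j)), g j (v ∘ σ) = g j v)
    (P : ℕ → X → Y) (hP : ∀ j x, P j x = g j (fun _ => x)) :
    ∃ f : X → Y, ContDiff ℝ (⊤ : ℕ∞) f ∧
      (∀ n : ℕ, ∃ C : ℝ, ∀ x, ‖iteratedFDeriv ℝ n f x‖ ≤ C) ∧
      ∀ (j : ℕ) (x : X), iteratedFDeriv ℝ j f 0 (fun _ => x) = P j x := by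
  classical
  have hle : ∀ k : ℕ, (k : WithTop ℕ∞) ≤ ((⊤ : ℕ∞) : WithTop ℕ∞) :=
    fun k => by exact_mod_cast (le_top : (k : ℕ∞) ≤ ⊤)
  -- basic constants
  obtain ⟨C₀', hC₀'⟩ := hHbdd
  set C₀ : ℝ := max C₀' 1 with hC₀def
  have hC₀1 : (1 : ℝ) ≤ C₀ := le_max_right _ _
  have hC₀pos : (0 : ℝ) < C₀ := lt_of_lt_of_le one_pos hC₀1
  have hC₀ : ∀ x, ‖H x‖ ≤ C₀ := fun x => (hC₀' x).trans (le_max_left _ _)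
  choose C' hC' using hHder
  set Cm : ℕ → ℝ := fun n => 1 + ∑ m ∈ Finset.range (n + 1), max (C' m) 0 with hCmdef
  have hCm1 : ∀ n, (1 : ℝ) ≤ Cm n := by
    intro n
    have : (0 : ℝ) ≤ ∑ m ∈ Finset.range (n + 1), max (C' m) 0 :=
      Finset.sum_nonneg fun m _ => le_max_right _ _
    simp only [hCmdef]
    linarith
  have hCmpos : ∀ n, (0 : ℝ) < Cm n := fun n => lt_of_lt_of_le one_pos (hCm1 n)
  have hCmle : ∀ m n, m ≤ n → C' m ≤ Cm n := by
    intro m n hmn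
    have h1 : C' m ≤ max (C' m) 0 := le_max_left _ _
    have h2 : max (C' m) 0 ≤ ∑ k ∈ Finset.range (n + 1), max (C' k) 0 :=
      Finset.single_le_sum (f := fun k => max (C' k) 0)
        (fun k _ => le_max_right _ _) (Finset.mem_range.2 (by omega))
    simp only [hCmdef]
    linarith
  obtain ⟨ε, hε, hHi⟩ : ∃ ε > 0, ∀ y : X, ‖y‖ < ε → H y = y := by
    rcases Metric.eventually_nhds_iff.1 hHid with ⟨ε, hε, hiff⟩
    exact ⟨ε, hε, fun y hy => hiff (by simpa [dist_zero_right] using hy)⟩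
  -- the rescaled K-maps
  set h : ℝ → X → X := fun t x => t • H (t⁻¹ • x) with hhdef
  have hsmooth : ∀ t : ℝ, ContDiff ℝ (⊤ : ℕ∞) (h t) := fun t =>
    contDiff_const.smul (hH.comp (contDiff_const.smul contDiff_id))
  have hh0 : ∀ (t : ℝ) (x : X), 0 < t → ‖h t x‖ ≤ t * C₀ := by
    intro t x ht
    simp only [hhdef]
    rw [norm_smul, Real.norm_eq_abs, abs_of_pos ht]
    exact mul_le_mul_of_nonneg_left (hC₀ _) ht.le
  have hhm : ∀ (n m : ℕ) (t : ℝ) (x : X), 0 < t → t ≤ 1 → 1 ≤ m → m ≤ n →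
      ‖iteratedFDeriv ℝ m (h t) x‖ ≤ (Cm n / t) ^ m := by
    intro n m t x ht ht1 hm1 hmn
    set M : X →L[ℝ] X := t⁻¹ • ContinuousLinearMap.id ℝ X with hM
    have hMnorm : ‖M‖ ≤ t⁻¹ := by
      refine M.opNorm_le_bound (by positivity) (fun y => ?_)
      simp only [hM, ContinuousLinearMap.smul_apply, ContinuousLinearMap.id_apply,
        norm_smul, Real.norm_eq_abs, abs_of_pos (inv_pos.2 ht)]
      exact le_rfl
    have e1 : h t = fun x => t • (H ∘ ⇑M) x := rfl
    rw [e1, iteratedFDeriv_const_smul_apply' ((hH.comp M.contDiff).of_le (hle m)).contDiffAt]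
    have hb1 : ‖t • iteratedFDeriv ℝ m (H ∘ ⇑M) x‖
        ≤ t * ‖iteratedFDeriv ℝ m (H ∘ ⇑M) x‖ := by
      have := norm_smul_le t (iteratedFDeriv ℝ m (H ∘ ⇑M) x)
      rwa [Real.norm_eq_abs, abs_of_pos ht] at this
    refine hb1.trans ?_
    have e2 : iteratedFDeriv ℝ m (H ∘ ⇑M) x
        = (iteratedFDeriv ℝ m H (M x)).compContinuousLinearMap fun _ => M :=
      M.iteratedFDeriv_comp_right hH x (hle m)
    rw [e2]
    have h1 : ‖(iteratedFDeriv ℝ m H (M x)).compContinuousLinearMap (fun _ => M)‖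
        ≤ ‖iteratedFDeriv ℝ m H (M x)‖ * ∏ _j : Fin m, ‖M‖ :=
      ContinuousMultilinearMap.norm_compContinuousLinearMap_le _ _
    have h2 : (∏ _j : Fin m, ‖M‖) ≤ (t⁻¹) ^ m := by
      rw [Finset.prod_const, Finset.card_univ, Fintype.card_fin]
      exact pow_le_pow_left₀ (norm_nonneg _) hMnorm _
    have h3 : ‖iteratedFDeriv ℝ m H (M x)‖ ≤ Cm n := (hC' m _).trans (hCmle m n hmn)
    calc t * ‖(iteratedFDeriv ℝ m H (M x)).compContinuousLinearMap (fun _ => M)‖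
        ≤ t * (‖iteratedFDeriv ℝ m H (M x)‖ * ∏ _j : Fin m, ‖M‖) :=
          mul_le_mul_of_nonneg_left h1 ht.le
      _ ≤ t * (Cm n * (t⁻¹) ^ m) := by
          refine mul_le_mul_of_nonneg_left ?_ ht.le
          exact mul_le_mul h3 h2 (Finset.prod_nonneg fun _ _ => norm_nonneg _)
            (hCmpos n).le
      _ ≤ 1 * (Cm n ^ m * (t⁻¹) ^ m) := by
          refine mul_le_mul ht1 (mul_le_mul_of_nonneg_right ?_ (by positivity))
            (by positivity) zero_le_one
          exact le_self_pow₀ (hCm1 n) (by omega)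
      _ = (Cm n / t) ^ m := by
          rw [one_mul, div_pow, div_eq_mul_inv, inv_pow]
  -- the master bound for the composed maps
  have master : ∀ (n j : ℕ) (t : ℝ) (x : X), 0 < t → t ≤ 1 → t * C₀ ≤ 1 →
      ‖iteratedFDeriv ℝ n (fun x => g j (fun _ => h t x)) x‖
        ≤ n ! * ((j ! : ℝ) * ‖g j‖ * (t * C₀) ^ (j - n)) * (Cm n / t) ^ n := by
    intro n j t x ht ht1 htC
    have hD : ∀ i : ℕ, 1 ≤ i → i ≤ n → ‖iteratedFDeriv ℝ i (h t) x‖ ≤ (Cm n / t) ^ i :=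
      fun i hi1 hin => hhm n i t x ht ht1 hi1 hin
    have hC : ∀ i : ℕ, i ≤ n →
        ‖iteratedFDeriv ℝ i (fun z : X => g j fun _ => z) (h t x)‖
          ≤ (j ! : ℝ) * ‖g j‖ * (t * C₀) ^ (j - n) := by
      intro i hin
      refine (norm_iteratedFDeriv_diag_le (g j) i (h t x)).trans ?_
      have hd : (j.descFactorial i : ℝ) ≤ (j ! : ℝ) :=
        Nat.cast_le.2 (descFactorial_le_factorial j i)
      have hp1 : ‖h t x‖ ^ (j - i) ≤ (t * C₀) ^ (j - i) :=
        pow_le_pow_left₀ (norm_nonneg _) (hh0 t x ht) _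
      have hp2 : (t * C₀) ^ (j - i) ≤ (t * C₀) ^ (j - n) :=
        pow_le_pow_of_le_one (by positivity) htC (Nat.sub_le_sub_left hin j)
      calc (j.descFactorial i : ℝ) * ‖g j‖ * ‖h t x‖ ^ (j - i)
          ≤ (j ! : ℝ) * ‖g j‖ * ‖h t x‖ ^ (j - i) := by
            refine mul_le_mul_of_nonneg_right (mul_le_mul_of_nonneg_right hd ?_)
              (by positivity)
            exact norm_nonneg _
        _ ≤ (j ! : ℝ) * ‖g j‖ * (t * C₀) ^ (j - n) := by
            refine mul_le_mul_of_nonneg_left (hp1.trans hp2) (by positivity)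
    have := norm_iteratedFDeriv_comp_le (g := fun z : X => g j fun _ => z) (f := h t)
      (contDiff_diag (g j)) (hsmooth t) (hle n) x hC hD
    exact this
  -- choice of the scales
  set K : ℕ → ℝ := fun j => 1 + ∑ n ∈ Finset.range j, n ! * ‖g j‖ * C₀ ^ j * Cm n ^ n with hKdef
  have hsummand_nonneg : ∀ n j : ℕ, (0 : ℝ) ≤ n ! * ‖g j‖ * C₀ ^ j * Cm n ^ n := by
    intro n j
    have := (hCmpos n).le
    positivity
  have hK1 : ∀ j, (1 : ℝ) ≤ K j := by
    intro j
    have : (0 : ℝ) ≤ ∑ n ∈ Finset.range j, n ! * ‖g j‖ * C₀ ^ j * Cm n ^ n :=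
      Finset.sum_nonneg fun n _ => hsummand_nonneg n j
    simp only [hKdef]
    linarith
  have hKpos : ∀ j, (0 : ℝ) < K j := fun j => lt_of_lt_of_le one_pos (hK1 j)
  have hKle : ∀ n j, n < j → n ! * ‖g j‖ * C₀ ^ j * Cm n ^ n ≤ K j := by
    intro n j hnj
    have h2 : n ! * ‖g j‖ * C₀ ^ j * Cm n ^ n
        ≤ ∑ k ∈ Finset.range j, k ! * ‖g j‖ * C₀ ^ j * Cm k ^ k :=
      Finset.single_le_sum (f := fun k => (k ! : ℝ) * ‖g j‖ * C₀ ^ j * Cm k ^ k)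
        (fun k _ => hsummand_nonneg k j) (Finset.mem_range.2 hnj)
    simp only [hKdef]
    linarith
  set t : ℕ → ℝ := fun j => min (1 / C₀) ((2 : ℝ)⁻¹ ^ j / K j) with htdef
  have ht0 : ∀ j, 0 < t j := fun j =>
    lt_min (by positivity) (by positivity)
  have htC : ∀ j, t j * C₀ ≤ 1 := by
    intro j
    have : t j ≤ 1 / C₀ := min_le_left _ _
    calc t j * C₀ ≤ (1 / C₀) * C₀ := mul_le_mul_of_nonneg_right this hC₀pos.le
      _ = 1 := by field_simp
  have ht1 : ∀ j, t j ≤ 1 := by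
    intro j
    have h1 : t j ≤ 1 / C₀ := min_le_left _ _
    have h2 : 1 / C₀ ≤ 1 := by
      rw [div_le_one hC₀pos]; exact hC₀1
    linarith
  have htK : ∀ j, K j * t j ≤ (2 : ℝ)⁻¹ ^ j := by
    intro j
    have h1 : t j ≤ (2 : ℝ)⁻¹ ^ j / K j := min_le_right _ _
    calc K j * t j ≤ K j * ((2 : ℝ)⁻¹ ^ j / K j) :=
        mul_le_mul_of_nonneg_left h1 (hKpos j).le
      _ = (2 : ℝ)⁻¹ ^ j := by rw [mul_div_assoc', mul_div_cancel_left₀ _ (hKpos j).ne']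
  -- the summands
  set ψ : ℕ → X → Y := fun j x => (j ! : ℝ)⁻¹ • g j (fun _ => h (t j) x) with hψdef
  have hψsmooth : ∀ j, ContDiff ℝ (⊤ : ℕ∞) (ψ j) := by
    intro j
    exact ((contDiff_diag (g j)).comp (hsmooth (t j))).const_smul _
  set v : ℕ → ℕ → ℝ := fun n j =>
    if 2 * n + 1 ≤ j then (2 : ℝ)⁻¹ ^ j else n ! * ‖g j‖ * (Cm n / t j) ^ n with hvdef
  have hψbound : ∀ (n j : ℕ) (x : X), ‖iteratedFDeriv ℝ n (ψ j) x‖ ≤ v n j := by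
    intro n j x
    have hfact : (0 : ℝ) < (j ! : ℝ) := by exact_mod_cast j.factorial_pos
    have hsmf : ContDiff ℝ (n : ℕ) fun x : X => g j fun _ => h (t j) x :=
      ((contDiff_diag (g j)).comp (hsmooth (t j))).of_le (hle n)
    have base : ‖iteratedFDeriv ℝ n (ψ j) x‖
        ≤ n ! * ‖g j‖ * ((t j * C₀) ^ (j - n) * (Cm n / t j) ^ n) := by
      have e0 : iteratedFDeriv ℝ n (ψ j) x
          = (j ! : ℝ)⁻¹ • iteratedFDeriv ℝ n (fun x => g j fun _ => h (t j) x) x :=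
        iteratedFDeriv_const_smul_apply' hsmf.contDiffAt
      rw [e0]
      have hb1 : ‖(j ! : ℝ)⁻¹ • iteratedFDeriv ℝ n (fun x => g j fun _ => h (t j) x) x‖
          ≤ (j ! : ℝ)⁻¹ * ‖iteratedFDeriv ℝ n (fun x => g j fun _ => h (t j) x) x‖ := by
        have := norm_smul_le (j ! : ℝ)⁻¹
          (iteratedFDeriv ℝ n (fun x => g j fun _ => h (t j) x) x)
        rwa [Real.norm_eq_abs, abs_of_pos (inv_pos.2 hfact)] at this
      refine hb1.trans ?_
      have hm := master n j (t j) x (ht0 j) (ht1 j) (htC j)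
      calc (j ! : ℝ)⁻¹ * ‖iteratedFDeriv ℝ n (fun x => g j fun _ => h (t j) x) x‖
          ≤ (j ! : ℝ)⁻¹ * (n ! * ((j ! : ℝ) * ‖g j‖ * (t j * C₀) ^ (j - n))
              * (Cm n / t j) ^ n) := mul_le_mul_of_nonneg_left hm (by positivity)
        _ = n ! * ‖g j‖ * ((t j * C₀) ^ (j - n) * (Cm n / t j) ^ n) := by
            field_simp
    by_cases hcase : 2 * n + 1 ≤ j
    · simp only [hvdef, if_pos hcase]
      have key : (t j * C₀) ^ (j - n) * (Cm n / t j) ^ n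
          ≤ (t j * C₀) * (C₀ * Cm n) ^ n := by
        have e1 : j - n = (j - 2 * n) + n := by omega
        rw [e1, pow_add, mul_assoc, ← mul_pow]
        have e2 : t j * C₀ * (Cm n / t j) = C₀ * Cm n := by
          rw [mul_comm (t j) C₀, mul_assoc, mul_div_assoc', mul_div_cancel_left₀ _ (ht0 j).ne']
        rw [e2]
        refine mul_le_mul_of_nonneg_right ?_ (by positivity)
        have h1 : (t j * C₀) ^ (j - 2 * n) ≤ (t j * C₀) ^ 1 :=
          pow_le_pow_of_le_one (by positivity) (htC j) (by omega)
        simpa using h1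
      have key2 : n ! * ‖g j‖ * ((t j * C₀) * (C₀ * Cm n) ^ n)
          ≤ (n ! * ‖g j‖ * C₀ ^ j * Cm n ^ n) * t j := by
        have e3 : n ! * ‖g j‖ * ((t j * C₀) * (C₀ * Cm n) ^ n)
            = (n ! * ‖g j‖ * C₀ ^ (n + 1) * Cm n ^ n) * t j := by
          rw [mul_pow]; ring
        rw [e3]
        refine mul_le_mul_of_nonneg_right ?_ (ht0 j).le
        refine mul_le_mul_of_nonneg_right ?_ (by positivity)
        refine mul_le_mul_of_nonneg_left ?_ (by positivity)
        exact pow_le_pow_right₀ hC₀1 (by omega)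
      have key3 : (n ! * ‖g j‖ * C₀ ^ j * Cm n ^ n) * t j ≤ (2 : ℝ)⁻¹ ^ j := by
        calc (n ! * ‖g j‖ * C₀ ^ j * Cm n ^ n) * t j ≤ K j * t j :=
            mul_le_mul_of_nonneg_right (hKle n j (by omega)) (ht0 j).le
          _ ≤ (2 : ℝ)⁻¹ ^ j := htK j
      calc ‖iteratedFDeriv ℝ n (ψ j) x‖
          ≤ n ! * ‖g j‖ * ((t j * C₀) ^ (j - n) * (Cm n / t j) ^ n) := base
        _ ≤ n ! * ‖g j‖ * ((t j * C₀) * (C₀ * Cm n) ^ n) :=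
            mul_le_mul_of_nonneg_left key (by positivity)
        _ ≤ (n ! * ‖g j‖ * C₀ ^ j * Cm n ^ n) * t j := key2
        _ ≤ (2 : ℝ)⁻¹ ^ j := key3
    · simp only [hvdef, if_neg hcase]
      refine base.trans ?_
      have h1 : (t j * C₀) ^ (j - n) ≤ 1 :=
        pow_le_one₀ (by positivity) (htC j)
      calc n ! * ‖g j‖ * ((t j * C₀) ^ (j - n) * (Cm n / t j) ^ n)
          ≤ n ! * ‖g j‖ * (1 * (Cm n / t j) ^ n) := by
            refine mul_le_mul_of_nonneg_left ?_ (by positivity)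
            exact mul_le_mul_of_nonneg_right h1 (by positivity)
        _ = n ! * ‖g j‖ * (Cm n / t j) ^ n := by ring
  have hv_summ : ∀ n, Summable (v n) := by
    intro n
    refine (summable_nat_add_iff (2 * n + 1)).1 ?_
    have : (fun m => v n (m + (2 * n + 1))) = fun m => (2 : ℝ)⁻¹ ^ (m + (2 * n + 1)) := by
      funext m
      simp only [hvdef, if_pos (by omega : 2 * n + 1 ≤ m + (2 * n + 1))]
    rw [this]
    simp_rw [pow_add]
    exact (summable_geometric_of_lt_one (by norm_num) (by norm_num)).mul_right _
  -- assembling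
  refine ⟨fun x => ∑' j, ψ j x, ?_, ?_, ?_⟩
  · exact contDiff_tsum hψsmooth (fun k _ => hv_summ k) (fun k i x _ => hψbound k i x)
  · intro n
    refine ⟨∑' j, v n j, fun x => ?_⟩
    rw [iteratedFDeriv_tsum_apply hψsmooth (fun k _ => hv_summ k)
      (fun k i x _ => hψbound k i x) le_top]
    have hsum : Summable fun j => ‖iteratedFDeriv ℝ n (ψ j) x‖ :=
      Summable.of_nonneg_of_le (fun j => norm_nonneg _) (fun j => hψbound n j x) (hv_summ n)
    calc ‖∑' j, iteratedFDeriv ℝ n (ψ j) x‖ ≤ ∑' j, ‖iteratedFDeriv ℝ n (ψ j) x‖ :=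
        norm_tsum_le_tsum_norm hsum
      _ ≤ ∑' j, v n j := Summable.tsum_le_tsum (fun j => hψbound n j x) hsum (hv_summ n)
  · intro j x
    have hsum0 : Summable fun i => iteratedFDeriv ℝ j (ψ i) 0 :=
      Summable.of_norm_bounded (hv_summ j) (fun i => hψbound j i 0)
    rw [iteratedFDeriv_tsum_apply hψsmooth (fun k _ => hv_summ k)
      (fun k i x _ => hψbound k i x) le_top]
    -- evaluate the sum of multilinear maps at the diagonal vector
    have heval : (∑' i, iteratedFDeriv ℝ j (ψ i) 0) (fun _ => x)
        = ∑' i, iteratedFDeriv ℝ j (ψ i) 0 (fun _ => x) :=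
      (ContinuousMultilinearMap.hasSum_eval hsum0.hasSum (fun _ => x)).tsum_eq.symm
    rw [heval]
    -- each summand
    have hne : ∀ i : ℕ, ψ i =ᶠ[nhds (0 : X)]
        fun z => (i ! : ℝ)⁻¹ • g i (fun _ => z) := by
      intro i
      refine Metric.eventually_nhds_iff.2 ⟨t i * ε, by positivity, fun z hz => ?_⟩
      rw [dist_zero_right] at hz
      have hz' : ‖(t i)⁻¹ • z‖ < ε := by
        rw [norm_smul, Real.norm_eq_abs, abs_of_pos (inv_pos.2 (ht0 i))]
        rw [inv_mul_lt_iff₀ (ht0 i)]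
        linarith [hz]
      have : h (t i) z = z := by
        simp only [hhdef]
        rw [hHi _ hz', smul_inv_smul₀ (ht0 i).ne']
      simp only [hψdef, this]
    have e1 : ∀ i : ℕ, iteratedFDeriv ℝ j (ψ i) 0 (fun _ => x)
        = (i ! : ℝ)⁻¹ • iteratedFDeriv ℝ j (fun z : X => g i fun _ => z) 0 (fun _ => x) := by
      intro i
      rw [iteratedFDeriv_congr_nhds (hne i) j,
        iteratedFDeriv_const_smul_apply' ((contDiff_diag (g i)).of_le (hle j)).contDiffAt]
      rfl
    have e2 : ∀ i : ℕ, i ≠ j → iteratedFDeriv ℝ j (ψ i) 0 (fun _ => x) = 0 := by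
      intro i hij
      rw [e1 i, iteratedFDeriv_diag_ne (Ne.symm hij) (g i) x, smul_zero]
    have e3 : iteratedFDeriv ℝ j (ψ j) 0 (fun _ => x) = g j (fun _ => x) := by
      rw [e1 j, iteratedFDeriv_diag_self (g j) x, ← Nat.cast_smul_eq_nsmul ℝ, smul_smul,
        inv_mul_cancel₀ (by exact_mod_cast j.factorial_ne_zero), one_smul]
    rw [tsum_eq_single j e2, e3, hP]
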